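/- Let M be a Maya diagram and n ≥ 1 an integer. Then the cardinality of the symmetric difference (M + n) Δ M equals n + 2·∑_{i=0}^{n−1} g_i, where g_i is the genus of the Maya diagram M_i = {m ∈ ℤ : m·n + i ∈ M}. -/

import Mathlib

/-- A Maya diagram: a set of integers containing only finitely many
nonnegative integers and excluding only finitely many negative integers. -/
def IsMaya (M : Set ℤ) : Prop :=
  (M ∩ {k : ℤ | 0 ≤ k}).Finite ∧ ({k : ℤ | k < 0} \ M).Finite

/-- The translate `M + n = {m + n : m ∈ M}`. -/
def mTranslate (M : Set ℤ) (n : ℤ) : Set ℤ := (fun m => m + n) '' M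

/-- The boundary set of `M`: positions `b` such that exactly one of
`b ∈ M`, `b - 1 ∈ M` holds; for a Maya diagram it is finite of odd
cardinality `2g + 1`. -/
def mBoundary (M : Set ℤ) : Set ℤ := {b : ℤ | Xor' (b ∈ M) (b - 1 ∈ M)}

/-- The genus `g` of a Maya diagram, so that `|B(M)| = 2g + 1`. -/
noncomputable def mGenus (M : Set ℤ) : ℕ := ((mBoundary M).ncard - 1) / 2

/-- The `i`-th modular section `M_i = {m : m·n + i ∈ M}` of `M`. -/
def mSect (M : Set ℤ) (n i : ℕ) : Set ℤ := {m : ℤ | m * (n : ℤ) + (i : ℤ) ∈ M}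

open Classical in
noncomputable def chi (N : Set ℤ) (k : ℤ) : ZMod 2 := if k ∈ N then 1 else 0

open Classical in
lemma boundary_indicator (N : Set ℤ) (k : ℤ) :
    (if k ∈ mBoundary N then (1:ZMod 2) else 0) = chi N k + chi N (k-1) := by
  simp only [mBoundary, Set.mem_setOf_eq, chi, Xor']
  by_cases h1 : k ∈ N <;> by_cases h2 : k - 1 ∈ N <;> simp [h1, h2] <;> decide

lemma telescope (N : Set ℤ) (a : ℤ) : ∀ b, a ≤ b →
    ∑ k ∈ Finset.Icc a b, (chi N k + chi N (k-1)) = chi N b + chi N (a-1) := by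
  refine Int.le_induction ?_ ?_
  · simp
  · intro b hb ih
    have hins : Finset.Icc a (b+1) = insert (b+1) (Finset.Icc a b) := by
      ext x; simp only [Finset.mem_Icc, Finset.mem_insert]; omega
    rw [hins, Finset.sum_insert (by simp [Finset.mem_Icc]), ih]
    have h2 : ∀ x : ZMod 2, x + x = 0 := by decide
    rw [show b + 1 - 1 = b by ring]
    calc chi N (b+1) + chi N b + (chi N b + chi N (a-1))
        = chi N (b+1) + chi N (a-1) + (chi N b + chi N b) := by ring
      _ = chi N (b+1) + chi N (a-1) := by rw [h2]; ring

lemma maya_bounds (N : Set ℤ) (hN : IsMaya N) :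
    ∃ a b : ℤ, a ≤ b ∧ (∀ k < a, k ∈ N) ∧ (∀ k, b ≤ k → k ∉ N) := by
  obtain ⟨L, hL⟩ := hN.2.bddBelow
  obtain ⟨U, hU⟩ := hN.1.bddAbove
  refine ⟨min L 0, max (U + 1) 1, by omega, ?_, ?_⟩
  · intro k hk
    by_contra hkN
    have : k ∈ {k : ℤ | k < 0} \ N := ⟨by simp; omega, hkN⟩
    have := hL this
    omega
  · intro k hk hkN
    have : k ∈ N ∩ {k : ℤ | 0 ≤ k} := ⟨hkN, by simp; omega⟩
    have := hU this
    omega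

open Classical in
lemma boundary_facts (N : Set ℤ) (hN : IsMaya N) :
    (mBoundary N).Finite ∧ Odd (mBoundary N).ncard := by
  obtain ⟨a, b, hab, ha, hb⟩ := maya_bounds N hN
  have hsub : mBoundary N ⊆ ↑(Finset.Icc a b) := by
    intro k hk
    simp only [Finset.coe_Icc, Set.mem_Icc]
    by_contra hcon
    push_neg at hcon
    rcases le_or_gt a k with h | h
    · have hbk := hcon h
      have h1 : k ∉ N := hb k (by omega)
      have h2 : k - 1 ∉ N := hb (k-1) (by omega)
      rcases hk with ⟨hx, hy⟩ | ⟨hx, hy⟩ <;> tauto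
    · have h1 : k ∈ N := ha k h
      have h2 : k - 1 ∈ N := ha (k-1) (by omega)
      rcases hk with ⟨hx, hy⟩ | ⟨hx, hy⟩ <;> tauto
  have hfin : (mBoundary N).Finite := Set.Finite.subset (Finset.Icc a b).finite_toSet hsub
  refine ⟨hfin, ?_⟩
  have hsum : ∑ k ∈ Finset.Icc a b, (if k ∈ mBoundary N then (1:ZMod 2) else 0)
      = chi N b + chi N (a-1) := by
    rw [← telescope N a b hab]
    exact Finset.sum_congr rfl fun k _ => boundary_indicator N k
  have hchib : chi N b = 0 := by simp [chi, hb b le_rfl]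
  have hchia : chi N (a-1) = 1 := by simp [chi, ha (a-1) (by omega)]
  rw [hchib, hchia, zero_add] at hsum
  have hfilter : (Finset.Icc a b).filter (· ∈ mBoundary N) = hfin.toFinset := by
    ext k
    rw [Finset.mem_filter, Set.Finite.mem_toFinset]
    constructor
    · exact fun h => h.2
    · intro hk
      exact ⟨Finset.mem_coe.mp (hsub hk), hk⟩
  rw [Finset.sum_boole, hfilter] at hsum
  have hncard : (mBoundary N).ncard = hfin.toFinset.card := Set.ncard_eq_toFinset_card _ hfin
  have hone : ((mBoundary N).ncard : ZMod 2) = 1 := by rw [hncard]; exact hsum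
  rcases Nat.even_or_odd (mBoundary N).ncard with he | ho
  · exfalso
    obtain ⟨c, hc⟩ := he
    rw [hc] at hone
    push_cast at hone
    rw [show ((c:ZMod 2) + c = c * 2) by ring, show (2 : ZMod 2) = 0 by decide,
      mul_zero] at hone
    exact absurd hone (by decide)
  · exact ho

lemma boundary_card (N : Set ℤ) (hN : IsMaya N) :
    (mBoundary N).ncard = 2 * mGenus N + 1 := by
  have h := (boundary_facts N hN).2
  rw [Nat.odd_iff] at h
  unfold mGenus
  omega

lemma sect_maya (M : Set ℤ) (n i : ℕ) (hM : IsMaya M) (hn : 1 ≤ n) (hi : i < n) :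
    IsMaya (mSect M n i) := by
  have hinj : Function.Injective (fun m : ℤ => m * (n:ℤ) + (i:ℤ)) := by
    intro x y h
    simp only at h
    have hn' : (1:ℤ) ≤ n := by exact_mod_cast hn
    have : x * n = y * n := by omega
    exact mul_right_cancel₀ (by omega) this
  constructor
  · apply Set.Finite.subset (hM.1.preimage (hinj.injOn))
    rintro m ⟨hm1, hm2⟩
    simp only [Set.mem_setOf_eq] at hm2
    refine ⟨hm1, ?_⟩
    simp only [Set.mem_setOf_eq]
    have hn' : (1:ℤ) ≤ n := by exact_mod_cast hn
    nlinarith [hm2]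
  · apply Set.Finite.subset (hM.2.preimage (hinj.injOn))
    rintro m ⟨hm1, hm2⟩
    simp only [Set.mem_setOf_eq] at hm1
    refine ⟨?_, hm2⟩
    simp only [Set.mem_setOf_eq]
    have hn' : (1:ℤ) ≤ n := by exact_mod_cast hn
    have hi' : (i:ℤ) < n := by exact_mod_cast hi
    nlinarith [hm1]

lemma symm_decomp (M : Set ℤ) (n : ℕ) (hn : 1 ≤ n) :
    symmDiff (mTranslate M (n:ℤ)) M
      = ⋃ i ∈ Finset.range n, (fun m : ℤ => m * (n:ℤ) + (i:ℤ)) '' mBoundary (mSect M n i) := by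
  have hn0 : (0:ℤ) < n := by exact_mod_cast hn
  have htr : ∀ x : ℤ, x ∈ mTranslate M (n:ℤ) ↔ x - n ∈ M := by
    intro x
    constructor
    · rintro ⟨m, hm, rfl⟩; simpa using hm
    · intro h; exact ⟨x - n, h, by ring⟩
  ext x
  simp only [Set.mem_symmDiff, Set.mem_iUnion, Set.mem_image, Finset.mem_range]
  constructor
  · intro hx
    set m := x / (n:ℤ) with hm
    set i := x % (n:ℤ) with hiEq
    have hi0 : 0 ≤ i := Int.emod_nonneg x (by omega)
    have hilt : i < n := Int.emod_lt_of_pos x hn0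
    have hx_eq : m * n + i = x := by rw [hm, hiEq, mul_comm]; exact Int.mul_ediv_add_emod x n
    refine ⟨i.toNat, by omega, m, ?_, ?_⟩
    · have hcast : ((i.toNat : ℕ) : ℤ) = i := Int.toNat_of_nonneg hi0
      have hmem : (m ∈ mSect M n i.toNat) ↔ x ∈ M := by
        simp only [mSect, Set.mem_setOf_eq, hcast, hx_eq]
      have hmem1 : (m - 1 ∈ mSect M n i.toNat) ↔ x ∈ mTranslate M (n:ℤ) := by
        simp only [mSect, Set.mem_setOf_eq, hcast, htr x,
          show (m-1)*(n:ℤ)+(i:ℤ) = x - n from by linarith]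
      simp only [mBoundary, Set.mem_setOf_eq, Xor']
      rw [hmem, hmem1]
      tauto
    · have hcast : ((i.toNat : ℕ) : ℤ) = i := Int.toNat_of_nonneg hi0
      simp only [hcast]; exact hx_eq
  · rintro ⟨i, hi, m, hmB, rfl⟩
    simp only [mBoundary, mSect, Set.mem_setOf_eq, Xor'] at hmB
    rw [htr]
    have hrw : m * (n:ℤ) + (i:ℤ) - n = (m - 1) * n + i := by ring
    rw [hrw]
    have hM1 : (m * (n:ℤ) + (i:ℤ) ∈ M) ↔ m ∈ mSect M n i := Iff.rfl
    unfold Xor at hmB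
    tauto

lemma ncard_disj_biUnion (s : Finset ℕ) (f : ℕ → Set ℤ)
    (hf : ∀ i ∈ s, (f i).Finite)
    (hd : ∀ i ∈ s, ∀ j ∈ s, i ≠ j → Disjoint (f i) (f j)) :
    (⋃ i ∈ s, f i).ncard = ∑ i ∈ s, (f i).ncard := by
  classical
  induction s using Finset.induction with
  | empty => simp
  | @insert a s ha ih =>
    rw [Finset.sum_insert ha]
    have hun : (⋃ i ∈ insert a s, f i) = f a ∪ ⋃ i ∈ s, f i := by
      simp [Set.biUnion_insert]
    rw [hun]
    have hfinU : (⋃ i ∈ s, f i).Finite :=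
      Set.Finite.biUnion s.finite_toSet (fun i hi => hf i (Finset.mem_insert_of_mem hi))
    have hdisj : Disjoint (f a) (⋃ i ∈ s, f i) := by
      rw [Set.disjoint_iUnion₂_right]
      intro i hi
      exact hd a (Finset.mem_insert_self a s) i (Finset.mem_insert_of_mem hi)
        (fun h => ha (h ▸ hi))
    rw [Set.ncard_union_eq hdisj (hf a (Finset.mem_insert_self a s)) hfinU]
    rw [ih (fun i hi => hf i (Finset.mem_insert_of_mem hi))
      (fun i hi j hj hij => hd i (Finset.mem_insert_of_mem hi) j (Finset.mem_insert_of_mem hj) hij)]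

theorem card_symmDiff_translate (M : Set ℤ) (n : ℕ) (hM : IsMaya M)
    (hn : 1 ≤ n) :
    (symmDiff (mTranslate M (n : ℤ)) M).ncard =
      n + 2 * ∑ i ∈ Finset.range n, mGenus (mSect M n i) := by
  rw [symm_decomp M n hn]
  have hinjv : ∀ i : ℕ, Function.Injective (fun m : ℤ => m * (n:ℤ) + (i:ℤ)) := by
    intro i x y h; simp only at h
    have hn' : (1:ℤ) ≤ n := by exact_mod_cast hn
    exact mul_right_cancel₀ (by omega) (add_right_cancel h)
  have hfin : ∀ i ∈ Finset.range n,
      ((fun m : ℤ => m * (n:ℤ) + (i:ℤ)) '' mBoundary (mSect M n i)).Finite := by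
    intro i hi
    exact Set.Finite.image _
      (boundary_facts _ (sect_maya M n i hM hn (Finset.mem_range.mp hi))).1
  have hdisj : ∀ i ∈ Finset.range n, ∀ j ∈ Finset.range n, i ≠ j →
      Disjoint ((fun m : ℤ => m * (n:ℤ) + (i:ℤ)) '' mBoundary (mSect M n i))
        ((fun m : ℤ => m * (n:ℤ) + (j:ℤ)) '' mBoundary (mSect M n j)) := by
    intro i hi j hj hij
    rw [Set.disjoint_left]
    rintro x ⟨m, _, rfl⟩ ⟨m', _, hx⟩
    simp only at hx
    have hi' : (i:ℤ) < n := by exact_mod_cast Finset.mem_range.mp hi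
    have hj' : (j:ℤ) < n := by exact_mod_cast Finset.mem_range.mp hj
    have hij' : (i:ℤ) ≠ j := by exact_mod_cast fun h => hij (by exact_mod_cast h)
    have hdvd : (n:ℤ) ∣ ((i:ℤ) - j) := ⟨m' - m, by linarith⟩
    have habs : |(i:ℤ) - j| < n := by
      rw [abs_lt]
      constructor <;> [linarith [Int.ofNat_nonneg j]; linarith [Int.ofNat_nonneg i]]
    have := Int.eq_zero_of_abs_lt_dvd hdvd habs
    omega
  rw [ncard_disj_biUnion (Finset.range n) _ hfin hdisj]
  have hsum : ∀ i ∈ Finset.range n,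
      ((fun m : ℤ => m * (n:ℤ) + (i:ℤ)) '' mBoundary (mSect M n i)).ncard
        = 2 * mGenus (mSect M n i) + 1 := by
    intro i hi
    rw [Set.ncard_image_of_injective _ (hinjv i)]
    exact boundary_card _ (sect_maya M n i hM hn (Finset.mem_range.mp hi))
  rw [Finset.sum_congr rfl hsum, Finset.sum_add_distrib, Finset.sum_const,
    Finset.card_range, ← Finset.mul_sum]
  simp only [smul_eq_mul, mul_one]
  omega
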